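/- arXiv:2011.05944 — 11 statements merged into one kernel-verified Lean document; each statement's English description precedes it below -/
import Mathlib

section
/- Let $0 < \Delta_1 \leq \Delta_2$ and $0 \leq I_1 < I_2$ be reals, and define $\Psi(p) = ((1-p)\Delta_1 + p\Delta_2)^2 / ((1-p)I_1 + pI_2)$ for $p \in [0,1]$ (assuming the denominator is positive on $[0,1]$). Then $p^* = \mathrm{clip}_{[0,1]}\big(\Delta_1/(\Delta_2 - \Delta_1) - 2I_1/(I_2 - I_1)\big)$ minimizes $\Psi$ over $[0,1]$, with the convention $\Delta_1/0 = \infty$. -/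
lemma two_action_aux (Δ₁ Δ₂ I₁ I₂ q p c : ℝ) (Ψ : ℝ → ℝ)
    (hΨ : ∀ r, Ψ r = ((1 - r) * Δ₁ + r * Δ₂)^2 / ((1 - r) * I₁ + r * I₂))
    (hDq : 0 < (1 - q) * I₁ + q * I₂) (hDp : 0 < (1 - p) * I₁ + p * I₂)
    (hcD : c * ((1 - q) * I₁ + q * I₂) = (1 - q) * Δ₁ + q * Δ₂)
    (hlin : 2*c*((1 - q) * Δ₁ + q * Δ₂) - c^2*((1 - q) * I₁ + q * I₂)
          ≤ 2*c*((1 - p) * Δ₁ + p * Δ₂) - c^2*((1 - p) * I₁ + p * I₂)) :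
    Ψ q ≤ Ψ p := by
  have h1 : Ψ q = 2*c*((1 - q) * Δ₁ + q * Δ₂) - c^2*((1 - q) * I₁ + q * I₂) := by
    rw [hΨ, ← hcD]
    field_simp
    ring
  have h2 : Ψ p * ((1 - p) * I₁ + p * I₂) = ((1 - p) * Δ₁ + p * Δ₂)^2 := by
    rw [hΨ]; field_simp
  nlinarith [sq_nonneg ((1 - p) * Δ₁ + p * Δ₂ - c * ((1 - p) * I₁ + p * I₂)), hDp, h2, h1, hlin]

theorem two_action_ids_optimal_prob (Δ₁ Δ₂ I₁ I₂ : ℝ)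
    (hΔ₁ : 0 < Δ₁) (hΔ : Δ₁ ≤ Δ₂) (hI₁ : 0 ≤ I₁) (hI : I₁ < I₂)
    (Ψ : ℝ → ℝ)
    (hΨ : ∀ p, Ψ p = ((1 - p) * Δ₁ + p * Δ₂)^2 / ((1 - p) * I₁ + p * I₂))
    (hden : ∀ p ∈ Set.Icc (0:ℝ) 1, 0 < (1 - p) * I₁ + p * I₂)
    (pstar : ℝ)
    (hp : pstar = if Δ₁ = Δ₂ then 1
      else max 0 (min 1 (Δ₁ / (Δ₂ - Δ₁) - 2 * I₁ / (I₂ - I₁)))) :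
    pstar ∈ Set.Icc (0:ℝ) 1 ∧ ∀ p ∈ Set.Icc (0:ℝ) 1, Ψ pstar ≤ Ψ p := by
  have hmem : pstar ∈ Set.Icc (0:ℝ) 1 := by
    rw [hp]
    split
    · exact ⟨zero_le_one, le_refl 1⟩
    · exact ⟨le_max_left 0 _, max_le zero_le_one (min_le_left 1 _)⟩
  refine ⟨hmem, ?_⟩
  intro p hpm
  obtain ⟨hp0, hp1⟩ := hpm
  have hDp : 0 < (1 - p) * I₁ + p * I₂ := hden p ⟨hp0, hp1⟩
  by_cases hE : Δ₁ = Δ₂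
  · -- pstar = 1
    have hps : pstar = 1 := by rw [hp, if_pos hE]
    subst hps
    have hDs : 0 < (1 - (1:ℝ)) * I₁ + 1 * I₂ := hden 1 ⟨zero_le_one, le_refl 1⟩
    obtain ⟨c, hc⟩ : ∃ c, c = ((1 - (1:ℝ)) * Δ₁ + 1 * Δ₂) / ((1 - (1:ℝ)) * I₁ + 1 * I₂) := ⟨_, rfl⟩
    have hcD : c * ((1 - (1:ℝ)) * I₁ + 1 * I₂) = (1 - (1:ℝ)) * Δ₁ + 1 * Δ₂ := by
      rw [hc]; exact div_mul_cancel₀ _ hDs.ne'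
    apply two_action_aux Δ₁ Δ₂ I₁ I₂ 1 p c Ψ hΨ hDs hDp hcD
    rw [hE]
    nlinarith [mul_nonneg (mul_nonneg (by linarith : (0:ℝ) ≤ 1 - p) (sq_nonneg c)) (by linarith : (0:ℝ) ≤ I₂ - I₁)]
  · have ha : 0 < Δ₂ - Δ₁ := lt_of_le_of_ne (by linarith) (fun h => hE (by linarith)) |>.trans_le (le_refl _)
    have hb : 0 < I₂ - I₁ := by linarith
    obtain ⟨t, htdef⟩ : ∃ t, t = Δ₁ / (Δ₂ - Δ₁) - 2 * I₁ / (I₂ - I₁) := ⟨_, rfl⟩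
    have hps : pstar = max 0 (min 1 t) := by rw [hp, if_neg hE, ← htdef]
    have ht : (Δ₂ - Δ₁) * (I₂ - I₁) * t = (I₂ - I₁) * Δ₁ - 2 * (Δ₂ - Δ₁) * I₁ := by
      rw [htdef]; field_simp
    rcases le_or_gt t 0 with ht0 | ht0
    · -- pstar = 0
      have hps0 : pstar = 0 := by
        rw [hps]; exact max_eq_left (le_trans (min_le_right 1 t) ht0)
      subst hps0
      have hI₁p : 0 < I₁ := by
        have := hden 0 ⟨le_refl 0, zero_le_one⟩; linarith
      have hDs : 0 < (1 - (0:ℝ)) * I₁ + 0 * I₂ := hden 0 ⟨le_refl 0, zero_le_one⟩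
      obtain ⟨c, hc⟩ : ∃ c, c = ((1 - (0:ℝ)) * Δ₁ + 0 * Δ₂) / ((1 - (0:ℝ)) * I₁ + 0 * I₂) := ⟨_, rfl⟩
      have hcD : c * ((1 - (0:ℝ)) * I₁ + 0 * I₂) = (1 - (0:ℝ)) * Δ₁ + 0 * Δ₂ := by
        rw [hc]; exact div_mul_cancel₀ _ hDs.ne'
      have hc_pos : 0 < c := by rw [hc]; exact div_pos (by nlinarith) hDs
      have hkey : (I₂ - I₁) * Δ₁ ≤ 2 * (Δ₂ - Δ₁) * I₁ := by
        nlinarith [mul_pos ha hb]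
      clear hc htdef hp hps
      have hslope : 0 ≤ 2 * (Δ₂ - Δ₁) - c * (I₂ - I₁) := by
        nlinarith [hcD, hkey, hI₁p]
      apply two_action_aux Δ₁ Δ₂ I₁ I₂ 0 p c Ψ hΨ hDs hDp hcD
      nlinarith [mul_nonneg (mul_nonneg hp0 hc_pos.le) hslope]
    rcases le_or_gt 1 t with ht1 | ht1
    · -- pstar = 1
      have hps1 : pstar = 1 := by
        rw [hps, min_eq_left ht1]; exact max_eq_right zero_le_one
      subst hps1
      have hDs : 0 < (1 - (1:ℝ)) * I₁ + 1 * I₂ := hden 1 ⟨zero_le_one, le_refl 1⟩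
      have hI₂p : 0 < I₂ := by linarith [hden 1 ⟨zero_le_one, le_refl 1⟩]
      obtain ⟨c, hc⟩ : ∃ c, c = ((1 - (1:ℝ)) * Δ₁ + 1 * Δ₂) / ((1 - (1:ℝ)) * I₁ + 1 * I₂) := ⟨_, rfl⟩
      have hcD : c * ((1 - (1:ℝ)) * I₁ + 1 * I₂) = (1 - (1:ℝ)) * Δ₁ + 1 * Δ₂ := by
        rw [hc]; exact div_mul_cancel₀ _ hDs.ne'
      have hc_pos : 0 < c := by rw [hc]; exact div_pos (by nlinarith) hDs
      have hkey1 : (Δ₂ - Δ₁) * (I₂ - I₁) ≤ (I₂ - I₁) * Δ₁ - 2 * (Δ₂ - Δ₁) * I₁ := by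
        nlinarith [mul_nonneg (mul_pos ha hb).le (by linarith : (0:ℝ) ≤ t - 1)]
      have hkey : 2 * (Δ₂ - Δ₁) * I₂ ≤ (I₂ - I₁) * Δ₂ := by nlinarith [hkey1]
      clear hc htdef hp hps
      have hslope : 0 ≤ c * (I₂ - I₁) - 2 * (Δ₂ - Δ₁) := by
        nlinarith [hcD, hkey, hI₂p]
      apply two_action_aux Δ₁ Δ₂ I₁ I₂ 1 p c Ψ hΨ hDs hDp hcD
      nlinarith [mul_nonneg (mul_nonneg (by linarith : (0:ℝ) ≤ 1 - p) hc_pos.le) hslope]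
    · -- pstar = t, interior
      have hpst : pstar = t := by
        rw [hps, min_eq_right ht1.le]; exact max_eq_right ht0.le
      have hkey : (Δ₂ - Δ₁) * (I₂ - I₁) * pstar = (I₂ - I₁) * Δ₁ - 2 * (Δ₂ - Δ₁) * I₁ := by
        rw [hpst]; exact ht
      have hDs : 0 < (1 - pstar) * I₁ + pstar * I₂ := hden pstar hmem
      obtain ⟨c, hc⟩ : ∃ c, c = ((1 - pstar) * Δ₁ + pstar * Δ₂) / ((1 - pstar) * I₁ + pstar * I₂) := ⟨_, rfl⟩
      have hcD : c * ((1 - pstar) * I₁ + pstar * I₂) = (1 - pstar) * Δ₁ + pstar * Δ₂ := by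
        rw [hc]; exact div_mul_cancel₀ _ hDs.ne'
      have hbn : (I₂ - I₁) * ((1 - pstar) * Δ₁ + pstar * Δ₂)
          = 2 * (Δ₂ - Δ₁) * ((1 - pstar) * I₁ + pstar * I₂) := by
        linear_combination -hkey
      have hzero : (c * (I₂ - I₁) - 2 * (Δ₂ - Δ₁)) * ((1 - pstar) * I₁ + pstar * I₂) = 0 := by
        linear_combination (I₂ - I₁) * hcD + hbn
      have hcb : c * (I₂ - I₁) = 2 * (Δ₂ - Δ₁) := by
        rcases mul_eq_zero.mp hzero with h | h
        · linarith
        · exact absurd h hDs.ne'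
      apply two_action_aux Δ₁ Δ₂ I₁ I₂ pstar p c Ψ hΨ hDs hDp hcD
      have heq : 2*c*((1 - pstar) * Δ₁ + pstar * Δ₂) - c^2*((1 - pstar) * I₁ + pstar * I₂)
          = 2*c*((1 - p) * Δ₁ + p * Δ₂) - c^2*((1 - p) * I₁ + p * I₂) := by
        linear_combination (p - pstar) * c * hcb
      linarith [heq.le]
end

section
/- Let $\delta > 0$, $\Delta \geq 2\delta$ and $I > 0$. Then $\min_{p \in [0,1]} \frac{((1-p)\delta + p\Delta)^2}{pI} = \frac{4\delta(\Delta - \delta)}{I}$, achieved at $p^* = \delta/(\Delta - \delta)$. -/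
theorem two_action_ids_zero_info_first (δ Δ I : ℝ)
    (hδ : 0 < δ) (hΔ : 2 * δ ≤ Δ) (hI : 0 < I)
    (f : ℝ → ℝ)
    (hf : ∀ p, f p = ((1 - p) * δ + p * Δ)^2 / (p * I)) :
    f (δ / (Δ - δ)) = 4 * δ * (Δ - δ) / I ∧
      δ / (Δ - δ) ∈ Set.Ioc (0:ℝ) 1 ∧
      ∀ p ∈ Set.Ioc (0:ℝ) 1, 4 * δ * (Δ - δ) / I ≤ f p := by
  have hd : 0 < Δ - δ := by linarith
  refine ⟨?_, ⟨div_pos hδ hd, (div_le_one hd).mpr (by linarith)⟩, ?_⟩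
  · rw [hf]
    rw [div_eq_div_iff (by positivity) hI.ne']
    field_simp
    ring
  · intro p hp
    rw [hf]
    rw [div_le_div_iff₀ hI (mul_pos hp.1 hI)]
    have h := sq_nonneg (δ - p * (Δ - δ))
    nlinarith [hI.le, hp.1.le]
end

section
/- Let $\hat\Delta, I \in \mathbb{R}_{\geq 0}^k$ and consider minimizing $\Psi(\mu) = \hat\Delta(\mu)^2/I(\mu)$ over probability distributions $\mu$ on $[k]$ with $I(\mu)>0$. If a minimizer exists, then there exists a minimizer supported on at most two indices. -/
open Finset

lemma ids_exists_neg {k : ℕ} (d : Fin k → ℝ) (h : ∑ x, d x = 0)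
    (x0 : Fin k) (hx0 : d x0 ≠ 0) : ∃ x, d x < 0 := by
  by_contra h'
  push_neg at h'
  have hall := (Finset.sum_eq_zero_iff_of_nonneg (fun x _ => h' x)).mp h
  exact hx0 (hall x0 (mem_univ _))

lemma ids_descend_step {k : ℕ} (Δ I : Fin k → ℝ)
    (μ : Fin k → ℝ) (hμ : ∀ x, 0 ≤ μ x)
    (d : Fin k → ℝ) (hd0 : ∀ x, μ x = 0 → d x = 0)
    (hdsum : ∑ x, d x = 0) (hdΔ : ∑ x, d x * Δ x = 0)
    (hdI : 0 ≤ ∑ x, d x * I x)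
    (hdne : ∃ x, d x < 0) :
    ∃ ν : Fin k → ℝ, (∀ x, 0 ≤ ν x) ∧ (∑ x, ν x = ∑ x, μ x) ∧
      (∑ x, ν x * Δ x = ∑ x, μ x * Δ x) ∧
      (∑ x, μ x * I x ≤ ∑ x, ν x * I x) ∧
      (univ.filter (fun x => ν x ≠ 0)).card < (univ.filter (fun x => μ x ≠ 0)).card := by
  classical
  obtain ⟨y, hy⟩ := hdne
  have hTne : (univ.filter (fun x => d x < 0)).Nonempty := ⟨y, by simp [hy]⟩
  obtain ⟨x0, hx0T, hx0min⟩ := Finset.exists_min_image _ (fun x => μ x / (-d x)) hTne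
  have hdx0 : d x0 < 0 := by simpa using (Finset.mem_filter.mp hx0T).2
  have hμx0 : 0 < μ x0 := by
    rcases lt_or_eq_of_le (hμ x0) with h | h
    · exact h
    · exact absurd (hd0 x0 h.symm) (ne_of_lt hdx0)
  set t : ℝ := μ x0 / (-d x0) with ht
  have htpos : 0 < t := div_pos hμx0 (by linarith)
  refine ⟨fun x => μ x + t * d x, ?_, ?_, ?_, ?_, ?_⟩
  · intro x
    show 0 ≤ μ x + t * d x
    by_cases hx : d x < 0
    · have hxT : x ∈ univ.filter (fun x => d x < 0) := by simp [hx]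
      have := hx0min x hxT
      have h2 : t * (-d x) ≤ μ x := (le_div_iff₀ (by linarith)).mp this
      rw [mul_neg] at h2
      linarith
    · push_neg at hx
      have := hμ x
      have := mul_nonneg htpos.le hx
      linarith
  · rw [Finset.sum_add_distrib, ← Finset.mul_sum, hdsum]; ring
  · have : ∀ x, (μ x + t * d x) * Δ x = μ x * Δ x + t * (d x * Δ x) := by intro x; ring
    simp_rw [this]
    rw [Finset.sum_add_distrib, ← Finset.mul_sum, hdΔ]; ring
  · have : ∀ x, (μ x + t * d x) * I x = μ x * I x + t * (d x * I x) := by intro x; ring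
    simp_rw [this]
    rw [Finset.sum_add_distrib, ← Finset.mul_sum]
    nlinarith
  · apply Finset.card_lt_card
    rw [Finset.ssubset_iff_of_subset]
    · refine ⟨x0, ?_, ?_⟩
      · simp [ne_of_gt hμx0]
      · simp only [Finset.mem_filter, mem_univ, true_and, not_not]
        show μ x0 + t * d x0 = 0
        have hne : d x0 ≠ 0 := ne_of_lt hdx0
        have : t * d x0 = -μ x0 := by
          rw [ht, div_mul_eq_mul_div, div_neg, mul_div_cancel_right₀ _ hne]
        linarith
    · intro x hx
      simp only [Finset.mem_filter, mem_univ, true_and] at hx ⊢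
      intro hμx
      exact hx (by show μ x + t * d x = 0; rw [hμx, hd0 x hμx]; ring)

lemma ids_descend {k : ℕ} (Δ I : Fin k → ℝ)
    (μ : Fin k → ℝ) (hμ : ∀ x, 0 ≤ μ x)
    (d : Fin k → ℝ) (hd0 : ∀ x, μ x = 0 → d x = 0)
    (hdsum : ∑ x, d x = 0) (hdΔ : ∑ x, d x * Δ x = 0)
    (x0 : Fin k) (hx0 : d x0 ≠ 0) :
    ∃ ν : Fin k → ℝ, (∀ x, 0 ≤ ν x) ∧ (∑ x, ν x = ∑ x, μ x) ∧
      (∑ x, ν x * Δ x = ∑ x, μ x * Δ x) ∧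
      (∑ x, μ x * I x ≤ ∑ x, ν x * I x) ∧
      (univ.filter (fun x => ν x ≠ 0)).card < (univ.filter (fun x => μ x ≠ 0)).card := by
  rcases le_total 0 (∑ x, d x * I x) with h | h
  · exact ids_descend_step Δ I μ hμ d hd0 hdsum hdΔ h (ids_exists_neg d hdsum x0 hx0)
  · refine ids_descend_step Δ I μ hμ (fun x => -d x) (fun x hx => by simp [hd0 x hx])
      (by simpa using hdsum) ?_ ?_ ?_
    · have : ∀ x, (-d x) * Δ x = -(d x * Δ x) := fun x => by ring
      simp_rw [this]; rw [Finset.sum_neg_distrib, hdΔ]; ring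
    · have : ∀ x, (-d x) * I x = -(d x * I x) := fun x => by ring
      simp_rw [this]; rw [Finset.sum_neg_distrib]; linarith
    · obtain ⟨x, hx⟩ := ids_exists_neg (fun x => -d x) (by simpa using hdsum) x0 (by simpa using hx0)
      exact ⟨x, hx⟩

theorem ids_two_action_support (k : ℕ) (Δ I : Fin k → ℝ)
    (hΔ : ∀ x, 0 ≤ Δ x) (hI : ∀ x, 0 ≤ I x)
    (Ψ : (Fin k → ℝ) → ℝ)
    (hΨ : ∀ μ, Ψ μ = (∑ x, μ x * Δ x)^2 / (∑ x, μ x * I x))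
    (μstar : Fin k → ℝ) (hpos : ∀ x, 0 ≤ μstar x) (hsum : (∑ x, μstar x) = 1)
    (hIpos : 0 < ∑ x, μstar x * I x)
    (hmin : ∀ ν : Fin k → ℝ, (∀ x, 0 ≤ ν x) → (∑ x, ν x) = 1 →
      0 < (∑ x, ν x * I x) → Ψ μstar ≤ Ψ ν) :
    ∃ ν : Fin k → ℝ, (∀ x, 0 ≤ ν x) ∧ (∑ x, ν x) = 1 ∧
      0 < (∑ x, ν x * I x) ∧ Ψ ν = Ψ μstar ∧
      ∃ a b : Fin k, ∀ x, ν x ≠ 0 → x = a ∨ x = b := by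
  classical
  suffices H : ∀ n (μ : Fin k → ℝ), (univ.filter (fun x => μ x ≠ 0)).card ≤ n →
      (∀ x, 0 ≤ μ x) → (∑ x, μ x) = 1 → 0 < ∑ x, μ x * I x → Ψ μ = Ψ μstar →
      ∃ ν : Fin k → ℝ, (∀ x, 0 ≤ ν x) ∧ (∑ x, ν x) = 1 ∧
        0 < (∑ x, ν x * I x) ∧ Ψ ν = Ψ μstar ∧
        ∃ a b : Fin k, ∀ x, ν x ≠ 0 → x = a ∨ x = b by
    exact H _ μstar le_rfl hpos hsum hIpos rfl
  intro n
  induction n with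
  | zero =>
    intro μ hcard hμ hs hIμ _
    exfalso
    have : ∀ x, μ x = 0 := by
      intro x
      by_contra hx
      have : x ∈ univ.filter (fun x => μ x ≠ 0) := by simp [hx]
      have := Finset.card_pos.mpr ⟨x, this⟩
      omega
    simp [this] at hs
  | succ n ih =>
    intro μ hcard hμ hs hIμ hΨμ
    set S := univ.filter (fun x => μ x ≠ 0) with hS
    by_cases h2 : S.card ≤ 2
    · -- use μ itself
      have hSne : S.Nonempty := by
        rcases S.eq_empty_or_nonempty with h | h
        · exfalso
          have : ∀ x, μ x = 0 := by
            intro x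
            by_contra hx
            have : x ∈ S := by simp [hS, hx]
            simp [h] at this
          simp [this] at hs
        · exact h
      refine ⟨μ, hμ, hs, hIμ, hΨμ, ?_⟩
      interval_cases h : S.card
      · exact absurd (Finset.card_eq_zero.mp h) hSne.ne_empty
      · obtain ⟨a, ha⟩ := Finset.card_eq_one.mp h
        exact ⟨a, a, fun x hx => by
          have : x ∈ S := by simp [hS, hx]
          rw [ha] at this; simp at this; tauto⟩
      · obtain ⟨a, b, _, hab⟩ := Finset.card_eq_two.mp h
        exact ⟨a, b, fun x hx => by
          have : x ∈ S := by simp [hS, hx]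
          rw [hab] at this; simpa using this⟩
    · -- S.card ≥ 3: find a b c distinct in S
      have h3 : 3 ≤ S.card := by omega
      obtain ⟨a, ha⟩ := Finset.card_pos.mp (by omega : 0 < S.card)
      have : 0 < (S.erase a).card := by
        rw [Finset.card_erase_of_mem ha]; omega
      obtain ⟨b, hb⟩ := Finset.card_pos.mp this
      have : 0 < ((S.erase a).erase b).card := by
        rw [Finset.card_erase_of_mem hb, Finset.card_erase_of_mem ha]; omega
      obtain ⟨c, hc⟩ := Finset.card_pos.mp this
      have hba : b ≠ a := (Finset.mem_erase.mp hb).1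
      have hbS : b ∈ S := (Finset.mem_erase.mp hb).2
      have hcb : c ≠ b := (Finset.mem_erase.mp hc).1
      have hca : c ≠ a := (Finset.mem_erase.mp (Finset.mem_erase.mp hc).2).1
      have hcS : c ∈ S := (Finset.mem_erase.mp (Finset.mem_erase.mp hc).2).2
      have hmem : ∀ x, x ∈ S ↔ μ x ≠ 0 := by intro x; simp [hS]
      -- construct direction d
      set ind : Fin k → Fin k → ℝ := fun u x => if x = u then 1 else 0 with hind
      have sum_ind : ∀ (u : Fin k) (f : Fin k → ℝ), ∑ x, ind u x * f x = f u := by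
        intro u f
        rw [hind]
        simp [Finset.sum_ite_eq']
      have key : ∃ d : Fin k → ℝ, (∀ x, μ x = 0 → d x = 0) ∧ (∑ x, d x = 0) ∧
          (∑ x, d x * Δ x = 0) ∧ ∃ x0, d x0 ≠ 0 := by
        by_cases hab : Δ a = Δ b
        · refine ⟨fun x => ind a x - ind b x, ?_, ?_, ?_, ⟨a, ?_⟩⟩
          · intro x hx
            have hxa : x ≠ a := fun h => ((hmem a).mp ha) (h ▸ hx)
            have hxb : x ≠ b := fun h => ((hmem b).mp hbS) (h ▸ hx)
            simp [hind, hxa, hxb]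
          · have : ∀ x, ind a x - ind b x = ind a x * 1 - ind b x * 1 := fun x => by ring
            simp_rw [this, Finset.sum_sub_distrib, sum_ind]; ring
          · have : ∀ x, (ind a x - ind b x) * Δ x = ind a x * Δ x - ind b x * Δ x :=
              fun x => by ring
            simp_rw [this, Finset.sum_sub_distrib, sum_ind, hab]; ring
          · simp [hind, hba.symm]
        · refine ⟨fun x => (Δ b - Δ c) * ind a x + (Δ c - Δ a) * ind b x + (Δ a - Δ b) * ind c x,
            ?_, ?_, ?_, ⟨c, ?_⟩⟩
          · intro x hx
            have hxa : x ≠ a := fun h => ((hmem a).mp ha) (h ▸ hx)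
            have hxb : x ≠ b := fun h => ((hmem b).mp hbS) (h ▸ hx)
            have hxc : x ≠ c := fun h => ((hmem c).mp hcS) (h ▸ hx)
            simp [hind, hxa, hxb, hxc]
          · have : ∀ x, (Δ b - Δ c) * ind a x + (Δ c - Δ a) * ind b x + (Δ a - Δ b) * ind c x
                = (Δ b - Δ c) * (ind a x * 1) + (Δ c - Δ a) * (ind b x * 1)
                  + (Δ a - Δ b) * (ind c x * 1) := fun x => by ring
            simp_rw [this, Finset.sum_add_distrib, ← Finset.mul_sum, sum_ind]; ring
          · have : ∀ x, ((Δ b - Δ c) * ind a x + (Δ c - Δ a) * ind b x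
                + (Δ a - Δ b) * ind c x) * Δ x
                = (Δ b - Δ c) * (ind a x * Δ x) + (Δ c - Δ a) * (ind b x * Δ x)
                  + (Δ a - Δ b) * (ind c x * Δ x) := fun x => by ring
            simp_rw [this, Finset.sum_add_distrib, ← Finset.mul_sum, sum_ind]; ring
          · simp [hind, hca, hcb]
            intro h
            exact hab (by linarith)
      obtain ⟨d, hd0, hdsum, hdΔ, x0, hx0⟩ := key
      obtain ⟨ν, hν0, hνsum, hνΔ, hνI, hνcard⟩ := ids_descend Δ I μ hμ d hd0 hdsum hdΔ x0 hx0
      rw [hs] at hνsum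
      have hIν : 0 < ∑ x, ν x * I x := lt_of_lt_of_le hIμ hνI
      have hΨν : Ψ ν = Ψ μstar := by
        have hle : Ψ ν ≤ Ψ μstar := by
          rw [← hΨμ, hΨ, hΨ, hνΔ]
          exact div_le_div_of_nonneg_left (sq_nonneg _) hIμ hνI |>.trans_eq rfl
        exact le_antisymm hle (hmin ν hν0 hνsum hIν)
      rw [← hS] at hνcard
      exact ih ν (by omega) hν0 hνsum hIν hΨν
end

section
/- Let $\mu^*$ minimize $\Psi(\mu) = \hat\Delta(\mu)^2/I(\mu)$ over the probability simplex, with $\Psi^* = \Psi(\mu^*)$, $\hat\Delta(\mu^*) > 0$ and $I(\mu^*) > 0$. Define $g(x) = \hat\Delta(x) - \frac{\Psi^*}{2\hat\Delta(\mu^*)} I(x)$. Then every $x$ in the support of $\mu^*$ satisfies $g(x) = \min_z g(z)$, and moreover $g(x) = \frac{1}{2}\hat\Delta(\mu^*)$ for all $x \in \mathrm{supp}(\mu^*)$. -/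
set_option maxHeartbeats 1000000


theorem ids_support_characterization (k : ℕ) (Δ I : Fin k → ℝ)
    (hΔ : ∀ x, 0 ≤ Δ x) (hI : ∀ x, 0 ≤ I x)
    (Ψ : (Fin k → ℝ) → ℝ)
    (hΨ : ∀ μ, Ψ μ = (∑ x, μ x * Δ x)^2 / (∑ x, μ x * I x))
    (μstar : Fin k → ℝ) (hpos : ∀ x, 0 ≤ μstar x) (hsum : (∑ x, μstar x) = 1)
    (hΔpos : 0 < ∑ x, μstar x * Δ x)
    (hIpos : 0 < ∑ x, μstar x * I x)
    (hmin : ∀ ν : Fin k → ℝ, (∀ x, 0 ≤ ν x) → (∑ x, ν x) = 1 →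
      0 < (∑ x, ν x * I x) → Ψ μstar ≤ Ψ ν)
    (g : Fin k → ℝ)
    (hg : ∀ x, g x = Δ x - (Ψ μstar / (2 * ∑ y, μstar y * Δ y)) * I x) :
    ∀ x, μstar x ≠ 0 →
      (∀ z, g x ≤ g z) ∧ g x = (∑ y, μstar y * Δ y) / 2 := by
  set D := ∑ y, μstar y * Δ y with hDdef
  set J := ∑ y, μstar y * I y with hJdef
  have hD : 0 < D := hΔpos
  have hJ : 0 < J := hIpos
  have hΨs : Ψ μstar = D^2 / J := by rw [hΨ]
  have hc : Ψ μstar / (2 * D) = D / (2 * J) := by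
    rw [hΨs]; field_simp
  -- key : minimality of g on the support
  have key : ∀ x, μstar x ≠ 0 → ∀ z, g x ≤ g z := by
    intro x hx z
    by_cases hzx : z = x
    · subst hzx; exact le_refl _
    have hμx : 0 < μstar x := lt_of_le_of_ne (hpos x) (Ne.symm hx)
    set a := Δ z - Δ x with hadef
    set b := I z - I x with hbdef
    have hmain : D^2 * b ≤ 2 * a * D * J := by
      apply le_of_forall_pos_le_add
      intro ε hε
      set t := min (min (μstar x) (J / (2 * (|b| + 1)))) (ε / (a^2 * J + 1)) with htdef
      have ht0 : 0 < t := by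
        apply lt_min (lt_min hμx _) _
        · positivity
        · positivity
      have ht1 : t ≤ μstar x := le_trans (min_le_left _ _) (min_le_left _ _)
      have ht2 : t ≤ J / (2 * (|b| + 1)) := le_trans (min_le_left _ _) (min_le_right _ _)
      have ht3 : t ≤ ε / (a^2 * J + 1) := min_le_right _ _
      have ht2' : t * (2 * (|b| + 1)) ≤ J := by
        rw [← le_div_iff₀ (by positivity)]; exact ht2
      have ht3' : t * (a^2 * J + 1) ≤ ε := by
        rw [← le_div_iff₀ (by positivity)]; exact ht3
      have hJt : 0 < J + t * b := by
        nlinarith [mul_le_mul_of_nonneg_left (neg_abs_le b) ht0.le, abs_nonneg b]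
      set ν : Fin k → ℝ :=
        fun y => μstar y + t * (if y = z then 1 else 0) - t * (if y = x then 1 else 0) with hνdef
      have hsum' : ∀ f : Fin k → ℝ,
          (∑ y, ν y * f y) = (∑ y, μstar y * f y) + t * f z - t * f x := by
        intro f
        have : ∀ y : Fin k, ν y * f y
            = μstar y * f y + (if y = z then t * f y else 0)
              - (if y = x then t * f y else 0) := by
          intro y; simp only [hνdef]; split_ifs <;> ring
        rw [Finset.sum_congr rfl (fun y _ => this y)]
        rw [Finset.sum_sub_distrib, Finset.sum_add_distrib,
          Finset.sum_ite_eq' Finset.univ z, Finset.sum_ite_eq' Finset.univ x]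
        simp
      have hν0 : ∀ y, 0 ≤ ν y := by
        intro y
        simp only [hνdef]
        split_ifs with h1 h2 h2
        · exact absurd (h1.symm.trans h2) hzx
        · nlinarith [hpos y]
        · rw [h2]; linarith [ht1]
        · nlinarith [hpos y]
      have hνsum : (∑ y, ν y) = 1 := by
        have h1 := hsum' (fun _ => 1)
        simp only [mul_one] at h1
        rw [hsum] at h1
        rw [h1]; ring
      have hνI : (∑ y, ν y * I y) = J + t * b := by
        rw [hsum' I]; simp only [hbdef]; ring
      have hνΔ : (∑ y, ν y * Δ y) = D + t * a := by
        rw [hsum' Δ]; simp only [hadef]; ring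
      have hle := hmin ν hν0 hνsum (by rw [hνI]; exact hJt)
      rw [hΨs, hΨ ν, hνΔ, hνI] at hle
      have h2 : D^2 * (J + t * b) ≤ (D + t * a)^2 * J :=
        (div_le_div_iff₀ hJ hJt).mp hle
      have hexp : (D + t * a)^2 * J - D^2 * (J + t * b)
          = t * (2 * a * D * J + t * (a^2 * J) - D^2 * b) := by ring
      have h3 : t * 0 ≤ t * (2 * a * D * J + t * (a^2 * J) - D^2 * b) := by
        rw [mul_zero, ← hexp]; linarith
      have h4 : 0 ≤ 2 * a * D * J + t * (a^2 * J) - D^2 * b :=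
        le_of_mul_le_mul_left h3 ht0
      nlinarith [ht3', ht0, h4]
    -- from hmain conclude g x ≤ g z
    have h5 : D * (D * b) ≤ D * (2 * a * J) := by
      have : D * (D * b) = D^2 * b := by ring
      rw [this]; linarith [hmain]
    have hbd : D * b ≤ 2 * a * J := le_of_mul_le_mul_left h5 hD
    rw [hg x, hg z, hc]
    have h6 : D / (2 * J) * (I z - I x) ≤ Δ z - Δ x := by
      rw [div_mul_eq_mul_div, div_le_iff₀ (by positivity)]
      nlinarith [hbd]
    rw [mul_sub] at h6
    linarith
  -- average of g equals D/2
  have havg : (∑ y, μstar y * g y) = D / 2 := by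
    have : ∀ y : Fin k, μstar y * g y
        = μstar y * Δ y - (D / (2 * J)) * (μstar y * I y) := by
      intro y; rw [hg y, hc]; ring
    rw [Finset.sum_congr rfl (fun y _ => this y), Finset.sum_sub_distrib,
      ← Finset.mul_sum, ← hDdef, ← hJdef]
    field_simp; ring
  intro x hx
  refine ⟨key x hx, ?_⟩
  have hup : g x ≤ D / 2 := by
    rw [← havg]
    calc g x = (∑ y, μstar y) * g x := by rw [hsum]; ring
    _ = ∑ y, μstar y * g x := by rw [Finset.sum_mul]
    _ ≤ ∑ y, μstar y * g y := by
        apply Finset.sum_le_sum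
        intro y _
        exact mul_le_mul_of_nonneg_left (key x hx y) (hpos y)
  have hdown : D / 2 ≤ g x := by
    rw [← havg]
    calc (∑ y, μstar y * g y) ≤ ∑ y, μstar y * g x := by
          apply Finset.sum_le_sum
          intro y _
          by_cases hy : μstar y = 0
          · simp [hy]
          · exact mul_le_mul_of_nonneg_left (key y hy x) (hpos y)
    _ = (∑ y, μstar y) * g x := by rw [Finset.sum_mul]
    _ = g x := by rw [hsum]; ring
  linarith
end

section
/- Let $x_1, \dots, x_n \in \mathbb{R}^d$ with $\|x_s\|_2 \leq 1$, and define $V_s = \mathbf{1}_d + \sum_{i<s} x_i x_i^\top$. Then $\sum_{s=1}^n \|x_s\|^2_{V_s^{-1}} \leq 2\log\det(V_{n+1}) \leq 2d\log\big(\tfrac{n+d}{d}\big)$. -/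
open Matrix

private lemma elliptic_log_ineq (u : ℝ) (h0 : 0 ≤ u) (h1 : u ≤ 1) :
    u ≤ 2 * Real.log (1 + u) := by
  have hp : (0:ℝ) < 1 + u := by linarith
  have h := Real.log_le_sub_one_of_pos (inv_pos.mpr hp)
  rw [Real.log_inv] at h
  have hinv : (1 + u) * (1 + u)⁻¹ = 1 := mul_inv_cancel₀ hp.ne'
  nlinarith [h, hinv, hp, h1, mul_le_mul_of_nonneg_left h hp.le]

private lemma elliptic_det_lemma {d : ℕ} (A : Matrix (Fin d) (Fin d) ℝ) (hA : A.PosDef)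
    (v : Fin d → ℝ) : (A + vecMulVec v v).det = A.det * (1 + v ⬝ᵥ A⁻¹ *ᵥ v) := by
  rw [Matrix.vecMulVec_eq Unit,
    Matrix.det_add_replicateCol_mul_replicateRow (Matrix.isUnit_iff_isUnit_det A |>.mp hA.isUnit)]
  congr 1
  rw [← Matrix.replicateRow_vecMul, Matrix.det_unique]
  simp [Matrix.replicateRow_mul_replicateCol_apply, ← dotProduct_mulVec]

private lemma elliptic_trace_eq {d : ℕ} (A : Matrix (Fin d) (Fin d) ℝ) (hA : A.IsHermitian) :
    A.trace = ∑ i, hA.eigenvalues i := by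
  nth_rewrite 1 [hA.spectral_theorem]
  rw [Unitary.conjStarAlgAut_apply]
  rw [Matrix.trace_mul_cycle]
  simp [Matrix.mem_unitaryGroup_iff'.mp (hA.eigenvectorUnitary).2, Matrix.trace_diagonal]

theorem elliptic_potential (d n : ℕ) (hd : 0 < d)
    (x : ℕ → Fin d → ℝ)
    (hx : ∀ s, Real.sqrt (x s ⬝ᵥ x s) ≤ 1)
    (V : ℕ → Matrix (Fin d) (Fin d) ℝ)
    (hV : ∀ s, V s = 1 + ∑ i ∈ Finset.range s, vecMulVec (x i) (x i)) :
    (∑ s ∈ Finset.range n, x s ⬝ᵥ ((V s)⁻¹ *ᵥ x s)) ≤ 2 * Real.log (V n).det ∧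
      2 * Real.log (V n).det ≤ 2 * d * Real.log ((n + d) / d) := by
  -- helpers
  have dotnn : ∀ (M : Matrix (Fin d) (Fin d) ℝ), M.PosSemidef → ∀ v : Fin d → ℝ,
      0 ≤ v ⬝ᵥ M *ᵥ v := fun M hM v => by simpa using hM.dotProduct_mulVec_nonneg v
  have hzz : ∀ z : Fin d → ℝ, 0 ≤ z ⬝ᵥ z := fun z => by
    simpa [Matrix.one_mulVec] using dotnn 1 Matrix.PosSemidef.one z
  set S : ℕ → Matrix (Fin d) (Fin d) ℝ :=
    fun s => ∑ i ∈ Finset.range s, vecMulVec (x i) (x i) with hSdef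
  have hSps : ∀ s, (S s).PosSemidef := by
    intro s
    refine Finset.sum_induction _ _ (fun a b ha hb => ha.add hb) Matrix.PosSemidef.zero ?_
    intro i _
    have h := Matrix.posSemidef_conjTranspose_mul_self (Matrix.replicateRow Unit (x i))
    simpa [Matrix.vecMulVec_eq Unit, Matrix.conjTranspose_replicateRow] using h
  have hVpd : ∀ s, (V s).PosDef := fun s => by
    rw [hV s]; exact Matrix.PosDef.one.add_posSemidef (hSps s)
  set u : ℕ → ℝ := fun s => x s ⬝ᵥ ((V s)⁻¹ *ᵥ x s) with hudef
  have hu0 : ∀ s, 0 ≤ u s := fun s => dotnn _ ((hVpd s).inv).posSemidef (x s)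
  have hxx : ∀ s, x s ⬝ᵥ x s ≤ 1 := fun s => by
    nlinarith [hx s, Real.sq_sqrt (hzz (x s)), Real.sqrt_nonneg (x s ⬝ᵥ x s)]
  have hu1 : ∀ s, u s ≤ 1 := by
    intro s
    set y := (V s)⁻¹ *ᵥ x s with hy
    have hxy : x s = V s *ᵥ y := by
      rw [hy, Matrix.mulVec_mulVec,
        Matrix.mul_nonsing_inv _ ((Matrix.isUnit_iff_isUnit_det _).mp (hVpd s).isUnit),
        Matrix.one_mulVec]
    have hVy : V s *ᵥ y = y + S s *ᵥ y := by
      rw [hV s]; rw [Matrix.add_mulVec, Matrix.one_mulVec]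
    have expand1 : x s ⬝ᵥ x s =
        y ⬝ᵥ y + y ⬝ᵥ (S s *ᵥ y) + ((S s *ᵥ y) ⬝ᵥ y + (S s *ᵥ y) ⬝ᵥ (S s *ᵥ y)) := by
      nth_rewrite 1 [hxy]; nth_rewrite 1 [hxy]
      rw [hVy, add_dotProduct, dotProduct_add, dotProduct_add]
    have expand2 : u s = y ⬝ᵥ y + (S s *ᵥ y) ⬝ᵥ y := by
      have : u s = x s ⬝ᵥ y := rfl
      rw [this, hxy, hVy, add_dotProduct]
    have h1 := dotnn (S s) (hSps s) y
    have h2 := hzz (S s *ᵥ y)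
    have h3 := hxx s
    linarith [expand1 ▸ h3, expand2]
  -- determinant recursion
  have hdet : ∀ s, (V (s+1)).det = (V s).det * (1 + u s) := by
    intro s
    have h1 : V (s+1) = V s + vecMulVec (x s) (x s) := by
      rw [hV (s+1), hV s, Finset.sum_range_succ, ← add_assoc]
    rw [h1, elliptic_det_lemma (V s) (hVpd s) (x s)]
  have hdetpos : ∀ s, 0 < (V s).det := fun s => (hVpd s).det_pos
  have hlog : ∀ s, Real.log (V (s+1)).det = Real.log (V s).det + Real.log (1 + u s) := by
    intro s
    rw [hdet s, Real.log_mul (hdetpos s).ne' (by have := hu0 s; positivity)]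
  have hV0 : Real.log (V 0).det = 0 := by
    rw [hV 0]; simp
  have tele : Real.log (V n).det = ∑ s ∈ Finset.range n, Real.log (1 + u s) := by
    have h := Finset.sum_range_sub (fun s => Real.log (V s).det) n
    have h2 : ∀ s ∈ Finset.range n,
        Real.log (V (s+1)).det - Real.log (V s).det = Real.log (1 + u s) := by
      intro s _; rw [hlog s]; ring
    rw [Finset.sum_congr rfl h2, hV0, sub_zero] at h
    exact h.symm
  constructor
  · -- first inequality
    calc (∑ s ∈ Finset.range n, x s ⬝ᵥ ((V s)⁻¹ *ᵥ x s))
        ≤ ∑ s ∈ Finset.range n, 2 * Real.log (1 + u s) :=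
          Finset.sum_le_sum fun s _ => elliptic_log_ineq (u s) (hu0 s) (hu1 s)
      _ = 2 * Real.log (V n).det := by rw [tele, Finset.mul_sum]
  · -- second inequality
    have hH : (V n).IsHermitian := (hVpd n).isHermitian
    set μ : Fin d → ℝ := hH.eigenvalues with hμ
    have hμpos : ∀ i, 0 < μ i := (hVpd n).eigenvalues_pos
    have htr : (V n).trace = ∑ i, μ i := elliptic_trace_eq (V n) hH
    have hdp : (V n).det = ∏ i, μ i := by simpa using hH.det_eq_prod_eigenvalues
    -- trace bound
    have htr_le : (V n).trace ≤ (n : ℝ) + d := by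
      rw [hV n, Matrix.trace_add, Matrix.trace_one, Matrix.trace_sum]
      have : ∀ i ∈ Finset.range n, (vecMulVec (x i) (x i)).trace ≤ 1 := by
        intro i _
        have : (vecMulVec (x i) (x i)).trace = x i ⬝ᵥ x i := by
          simp [Matrix.trace, Matrix.diag, Matrix.vecMulVec_apply, dotProduct]
        rw [this]; exact hxx i
      have hsum := Finset.sum_le_sum this
      simp only [Finset.sum_const, Finset.card_range, nsmul_eq_mul, mul_one] at hsum
      simp only [Fintype.card_fin]
      linarith
    have hdpos : (0:ℝ) < d := Nat.cast_pos.mpr hd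
    -- Jensen
    have hw : ∑ _i : Fin d, (1 / (d:ℝ)) = 1 := by
      rw [Finset.sum_const, Finset.card_univ, Fintype.card_fin, nsmul_eq_mul]
      field_simp
    have jensen := (strictConcaveOn_log_Ioi.concaveOn).le_map_sum
      (t := Finset.univ) (w := fun _ : Fin d => 1 / (d:ℝ)) (p := μ)
      (fun _ _ => by positivity) hw (fun i _ => hμpos i)
    simp only [smul_eq_mul] at jensen
    have hsum_eq : ∑ i, (1 / (d:ℝ)) * μ i = (V n).trace / d := by
      rw [htr, ← Finset.mul_sum]; ring
    have hlogdet : Real.log (V n).det = ∑ i, Real.log (μ i) := by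
      rw [hdp, Real.log_prod (fun i _ => (hμpos i).ne')]
    have hstep1 : Real.log (V n).det ≤ (d:ℝ) * Real.log ((V n).trace / d) := by
      rw [hlogdet]
      have h2 : ∑ i, Real.log (μ i) = (d:ℝ) * ∑ i, (1 / (d:ℝ)) * Real.log (μ i) := by
        rw [← Finset.mul_sum]
        field_simp
      rw [h2]
      rw [hsum_eq] at jensen
      exact mul_le_mul_of_nonneg_left jensen hdpos.le
    have hne : Nonempty (Fin d) := Fin.pos_iff_nonempty.mp hd
    have htrpos : 0 < (V n).trace := by
      rw [htr]
      exact Finset.sum_pos (fun i _ => hμpos i) Finset.univ_nonempty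
    have hstep2 : Real.log ((V n).trace / d) ≤ Real.log (((n:ℝ) + d) / d) := by
      apply Real.log_le_log (div_pos htrpos hdpos)
      gcongr
    have hfin : Real.log (V n).det ≤ (d:ℝ) * Real.log (((n:ℝ) + d) / d) :=
      hstep1.trans (mul_le_mul_of_nonneg_left hstep2 hdpos.le)
    linarith
end

section
/- Let $\mathcal{X} \subset \mathbb{R}^d$ be finite with optimal action $x^*$ for parameter $\theta^*$, all suboptimality gaps satisfying $\Delta(x) = \langle \theta^*, x^* - x \rangle \leq 1$. Let $V$ be positive definite, $\hat\theta \in \mathbb{R}^d$, $\beta = \|\hat\theta - \theta^*\|_V^2$, and for each $x \neq \hat x$ (where $\hat x = \arg\max_x \langle x, \hat\theta\rangle$) let $m = \tfrac12\min_{x \neq \hat x}\min_{\nu: \langle \nu, x - \hat x\rangle \geq 0} \|\nu - \hat\theta\|_V^2$. If $\beta < 2m$, then $\hat x = x^*$ and for every $x \in \mathcal{X}$, $\big((2m)^{1/2} - \beta^{1/2}\big)\|x^* - x\|_{V^{-1}} \leq 1$. -/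
open Matrix

lemma quad_nonneg' {d : ℕ} {V : Matrix (Fin d) (Fin d) ℝ} (hVpd : V.PosSemidef)
    (u : Fin d → ℝ) : 0 ≤ u ⬝ᵥ (V *ᵥ u) := by
  simpa using hVpd.re_dotProduct_nonneg u

lemma quad_pos' {d : ℕ} {V : Matrix (Fin d) (Fin d) ℝ} (hVpd : V.PosDef)
    {u : Fin d → ℝ} (hu : u ≠ 0) : 0 < u ⬝ᵥ (V *ᵥ u) := by
  simpa using hVpd.re_dotProduct_pos hu

lemma quad_sym' {d : ℕ} {V : Matrix (Fin d) (Fin d) ℝ} (hVpd : V.PosDef)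
    (u v : Fin d → ℝ) : u ⬝ᵥ (V *ᵥ v) = v ⬝ᵥ (V *ᵥ u) := by
  have hsym : Vᵀ = V := by
    have h : V.IsSymm := by simpa using hVpd.1
    exact h
  rw [dotProduct_mulVec v, ← hsym, vecMul_transpose, dotProduct_comm, hsym]

lemma mulVec_inv_cancel' {d : ℕ} {V : Matrix (Fin d) (Fin d) ℝ} (hVpd : V.PosDef)
    (y : Fin d → ℝ) : V *ᵥ (V⁻¹ *ᵥ y) = y := by
  rw [mulVec_mulVec, Matrix.mul_nonsing_inv _ hVpd.det_pos.ne'.isUnit, one_mulVec]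

theorem empirical_best_is_optimal (d : ℕ)
    (Xset : Finset (Fin d → ℝ)) (θstar θhat : Fin d → ℝ)
    (V : Matrix (Fin d) (Fin d) ℝ) (hVpd : V.PosDef)
    (xstar : Fin d → ℝ) (hxstar : xstar ∈ Xset)
    (hopt : ∀ x ∈ Xset, x ≠ xstar → θstar ⬝ᵥ x < θstar ⬝ᵥ xstar)
    (hgap : ∀ x ∈ Xset, θstar ⬝ᵥ (xstar - x) ≤ 1)
    (xhat : Fin d → ℝ) (hxhat : xhat ∈ Xset)
    (hxhatmax : ∀ x ∈ Xset, θhat ⬝ᵥ x ≤ θhat ⬝ᵥ xhat)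
    (β m : ℝ)
    (hβ : β = (θhat - θstar) ⬝ᵥ (V *ᵥ (θhat - θstar)))
    (hm : m = (1 / 2) * sInf {r : ℝ | ∃ x ∈ Xset, x ≠ xhat ∧
        ∃ ν : Fin d → ℝ, 0 ≤ ν ⬝ᵥ (x - xhat) ∧
          r = (ν - θhat) ⬝ᵥ (V *ᵥ (ν - θhat))})
    (hβm : β < 2 * m) :
    xhat = xstar ∧ ∀ x ∈ Xset,
      (Real.sqrt (2 * m) - Real.sqrt β) *
        Real.sqrt ((xstar - x) ⬝ᵥ (V⁻¹ *ᵥ (xstar - x))) ≤ 1 := by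
  set S : Set ℝ := {r : ℝ | ∃ x ∈ Xset, x ≠ xhat ∧
      ∃ ν : Fin d → ℝ, 0 ≤ ν ⬝ᵥ (x - xhat) ∧
        r = (ν - θhat) ⬝ᵥ (V *ᵥ (ν - θhat))} with hS
  have hbdd : BddBelow S := by
    refine ⟨0, fun r hr => ?_⟩
    obtain ⟨x, _, _, ν, _, hr⟩ := hr
    rw [hr]; exact quad_nonneg' hVpd.posSemidef _
  have h2m : 2 * m = sInf S := by rw [hm]; ring
  have hβ0 : 0 ≤ β := hβ ▸ quad_nonneg' hVpd.posSemidef _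
  -- Part 1 : xhat = xstar
  have hx_eq : xhat = xstar := by
    by_contra hne
    have hmem : β ∈ S := by
      refine ⟨xstar, hxstar, fun h => hne h.symm, θstar, ?_, ?_⟩
      · have h1 := hopt xhat hxhat hne
        rw [dotProduct_sub]; linarith
      · rw [hβ]
        have h2 : θstar - θhat = -(θhat - θstar) := by ring
        rw [h2, Matrix.mulVec_neg, dotProduct_neg, neg_dotProduct, neg_neg]
    have := csInf_le hbdd hmem
    rw [← h2m] at this
    linarith
  refine ⟨hx_eq, fun x hx => ?_⟩
  by_cases hxe : x = xhat
  · rw [← hx_eq, hxe, sub_self]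
    simp
  · set u : Fin d → ℝ := xhat - x with hu_def
    have hu : u ≠ 0 := sub_ne_zero_of_ne (Ne.symm hxe)
    set w : ℝ := u ⬝ᵥ (V⁻¹ *ᵥ u) with hw_def
    have hw : 0 < w := quad_pos' hVpd.inv hu
    set g : ℝ := θhat ⬝ᵥ u with hg_def
    have hg : 0 ≤ g := by
      have := hxhatmax x hx
      rw [hg_def, hu_def, dotProduct_sub]; linarith
    -- the witness ν
    have hmem : g ^ 2 / w ∈ S := by
      refine ⟨x, hx, hxe, θhat - (g / w) • (V⁻¹ *ᵥ u), ?_, ?_⟩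
      · have hxxh : x - xhat = -u := by rw [hu_def]; ring
        rw [hxxh, sub_dotProduct, dotProduct_neg, dotProduct_neg, smul_dotProduct,
          dotProduct_comm (V⁻¹ *ᵥ u) u, ← hw_def, ← hg_def, smul_eq_mul,
          div_mul_cancel₀ _ hw.ne']
        simp
      · have hsub : θhat - (g / w) • (V⁻¹ *ᵥ u) - θhat = -((g / w) • (V⁻¹ *ᵥ u)) := by ring
        rw [hsub, Matrix.mulVec_neg, Matrix.mulVec_smul, dotProduct_neg, neg_dotProduct,
          neg_neg, smul_dotProduct, dotProduct_smul, mulVec_inv_cancel' hVpd, smul_eq_mul,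
          smul_eq_mul, dotProduct_comm (V⁻¹ *ᵥ u) u, ← hw_def]
        field_simp
    have h2mle : 2 * m ≤ g ^ 2 / w := h2m ▸ csInf_le hbdd hmem
    have h2m0 : 0 ≤ 2 * m := le_trans hβ0 hβm.le
    -- sqrt(2m) * sqrt(w) ≤ g
    have hkey1 : Real.sqrt (2 * m) * Real.sqrt w ≤ g := by
      have h1 : 2 * m * w ≤ g ^ 2 := (le_div_iff₀ hw).mp h2mle
      calc Real.sqrt (2 * m) * Real.sqrt w = Real.sqrt (2 * m * w) :=
            (Real.sqrt_mul h2m0 w).symm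
        _ ≤ Real.sqrt (g ^ 2) := Real.sqrt_le_sqrt h1
        _ = g := by rw [Real.sqrt_sq hg]
    -- Cauchy-Schwarz : (θhat - θstar) ⬝ᵥ u ≤ sqrt β * sqrt w
    set e : Fin d → ℝ := θhat - θstar with he_def
    have hcs : e ⬝ᵥ u ≤ Real.sqrt β * Real.sqrt w := by
      have hquad : ∀ t : ℝ, 0 ≤ w * (t * t) + (2 * (e ⬝ᵥ u)) * t + β := by
        intro t
        have h0 := quad_nonneg' hVpd.posSemidef (e + t • (V⁻¹ *ᵥ u))
        have hexp : (e + t • (V⁻¹ *ᵥ u)) ⬝ᵥ (V *ᵥ (e + t • (V⁻¹ *ᵥ u)))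
            = w * (t * t) + (2 * (e ⬝ᵥ u)) * t + β := by
          rw [Matrix.mulVec_add, Matrix.mulVec_smul, dotProduct_add, add_dotProduct,
            add_dotProduct, dotProduct_smul, smul_dotProduct, smul_dotProduct,
            dotProduct_smul, mulVec_inv_cancel' hVpd,
            quad_sym' hVpd (V⁻¹ *ᵥ u) e, mulVec_inv_cancel' hVpd,
            dotProduct_comm (V⁻¹ *ᵥ u) u, ← hw_def, ← hβ, he_def]
          push_cast [smul_eq_mul]
          ring
        rw [hexp] at h0
        exact h0
      have hd := discrim_le_zero hquad
      rw [discrim] at hd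
      have hsq : (e ⬝ᵥ u) ^ 2 ≤ β * w := by nlinarith
      calc e ⬝ᵥ u ≤ |e ⬝ᵥ u| := le_abs_self _
        _ = Real.sqrt ((e ⬝ᵥ u) ^ 2) := (Real.sqrt_sq_eq_abs _).symm
        _ ≤ Real.sqrt (β * w) := Real.sqrt_le_sqrt hsq
        _ = Real.sqrt β * Real.sqrt w := Real.sqrt_mul hβ0 w
    -- combine
    have hfinal : θstar ⬝ᵥ (xstar - x) ≤ 1 := hgap x hx
    have heq : θstar ⬝ᵥ (xstar - x) = g - e ⬝ᵥ u := by
      rw [← hx_eq, ← hu_def, hg_def, he_def, sub_dotProduct]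
      ring
    rw [← hx_eq, ← hu_def, ← hw_def]
    calc (Real.sqrt (2 * m) - Real.sqrt β) * Real.sqrt w
        = Real.sqrt (2 * m) * Real.sqrt w - Real.sqrt β * Real.sqrt w := by ring
      _ ≤ g - e ⬝ᵥ u := by linarith
      _ = θstar ⬝ᵥ (xstar - x) := heq.symm
      _ ≤ 1 := hfinal
end

section
/- Let $K \subset \mathbb{R}^d$ be a convex polytope, $\eta \in \mathbb{R}^d$ a unit vector, and suppose $K_0 = \{x \in K : \langle x, \eta \rangle = 0\}$ is nonempty. Then there exists a constant $c > 0$ such that for all $z \in K$, $\min_{x \in K_0}\|x - z\|_2 \leq c\,|\langle z, \eta\rangle|$. -/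
open scoped RealInnerProductSpace
open Finset

set_option maxHeartbeats 1000000 in
theorem polytope_slice_aux (d : ℕ)
    (S : Finset (EuclideanSpace ℝ (Fin d)))
    (η : EuclideanSpace ℝ (Fin d))
    (K : Set (EuclideanSpace ℝ (Fin d))) (hK : K = convexHull ℝ (S : Set (EuclideanSpace ℝ (Fin d))))
    (K0 : Set (EuclideanSpace ℝ (Fin d))) (hK0 : K0 = {x ∈ K | ⟪x, η⟫ = 0})
    (w₀ : EuclideanSpace ℝ (Fin d)) (hw₀ : w₀ ∈ K0)
    (m R : ℝ) (hm : 0 < m)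
    (hR : ∀ v ∈ S, ‖v‖ ≤ R)
    (hmS : ∀ v ∈ S, 0 < ⟪v, η⟫ → m ≤ ⟪v, η⟫)
    (z : EuclideanSpace ℝ (Fin d)) (hz : z ∈ K) (ht : 0 ≤ ⟪z, η⟫) :
    Metric.infDist z K0 ≤ ((2*R+1)/m) * ⟪z, η⟫ := by
  have hKconv : Convex ℝ K := hK ▸ convex_convexHull ℝ _
  have hKball : ∀ x ∈ K, ‖x‖ ≤ R := by
    intro x hx
    have : K ⊆ Metric.closedBall 0 R := by
      rw [hK]
      apply convexHull_min _ (convex_closedBall 0 R)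
      intro v hv
      simpa [mem_closedBall_zero_iff] using hR v hv
    simpa [mem_closedBall_zero_iff] using this hx
  have hw₀K : w₀ ∈ K := by rw [hK0] at hw₀; exact hw₀.1
  have hw₀i : ⟪w₀, η⟫ = 0 := by rw [hK0] at hw₀; exact hw₀.2
  have hR0 : 0 ≤ R := le_trans (norm_nonneg w₀) (hKball w₀ hw₀K)
  have hne : K0.Nonempty := ⟨w₀, hw₀⟩
  by_cases h0 : ⟪z, η⟫ = 0
  · have hz0 : z ∈ K0 := by rw [hK0]; exact ⟨hz, h0⟩
    rw [Metric.infDist_zero_of_mem hz0, h0, mul_zero]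
  have ht' : (0:ℝ) < ⟪z, η⟫ := lt_of_le_of_ne ht (Ne.symm h0)
  -- weights
  have hzK := hz
  rw [hK, Finset.mem_convexHull'] at hz
  obtain ⟨lam, hlam0, hlam1, hlamz⟩ := hz
  set Sp := S.filter (fun v => 0 < ⟪v, η⟫) with hSp
  set Sc := S.filter (fun v => ¬ 0 < ⟪v, η⟫) with hSc
  set A := ∑ v ∈ Sp, lam v * ⟪v, η⟫ with hA
  set B := ∑ v ∈ Sc, lam v * (-⟪v, η⟫) with hB
  set lp := ∑ v ∈ Sp, lam v with hlp
  set lc := ∑ v ∈ Sc, lam v with hlc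
  have hsplit : lp + lc = 1 := by
    rw [hlp, hlc, Finset.sum_filter_add_sum_filter_not S _ lam, hlam1]
  have hzinner : ⟪z, η⟫ = A - B := by
    have : ⟪z, η⟫ = ∑ v ∈ S, lam v * ⟪v, η⟫ := by
      rw [← hlamz, sum_inner]
      exact Finset.sum_congr rfl fun v _ => real_inner_smul_left v η (lam v)
    rw [this, ← Finset.sum_filter_add_sum_filter_not S (fun v => 0 < ⟪v, η⟫), hA, hB, hSp, hSc]
    ring_nf
    rw [sub_eq_add_neg, ← Finset.sum_neg_distrib]
    congr 1
    · exact Finset.sum_congr rfl fun v _ => by ring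
  have hlp0 : 0 ≤ lp := Finset.sum_nonneg fun v hv => hlam0 v (Finset.mem_of_mem_filter v hv)
  have hlc0 : 0 ≤ lc := Finset.sum_nonneg fun v hv => hlam0 v (Finset.mem_of_mem_filter v hv)
  have hB0 : 0 ≤ B := Finset.sum_nonneg fun v hv => by
    have hv' := Finset.mem_filter.mp hv
    have := hlam0 v hv'.1
    nlinarith [not_lt.mp hv'.2]
  have hAml : m * lp ≤ A := by
    rw [hlp, Finset.mul_sum, hA]
    apply Finset.sum_le_sum
    intro v hv
    have hv' := Finset.mem_filter.mp hv
    have h1 := hlam0 v hv'.1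
    have h2 := hmS v hv'.1 hv'.2
    nlinarith
  have hA0 : 0 < A := by nlinarith
  have hlp' : 0 < lp := by
    rcases eq_or_lt_of_le hlp0 with h | h
    · exfalso
      have hz : ∀ v ∈ Sp, lam v = 0 :=
        (Finset.sum_eq_zero_iff_of_nonneg fun v hv =>
          hlam0 v (Finset.mem_of_mem_filter v hv)).mp h.symm
      have : A = 0 := Finset.sum_eq_zero fun v hv => by rw [hz v hv, zero_mul]
      linarith
    · exact h
  rcases eq_or_lt_of_le hlc0 with hlcz | hlc'
  · -- all mass on the strictly positive side
    have hzc : ∀ v ∈ Sc, lam v = 0 :=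
      (Finset.sum_eq_zero_iff_of_nonneg fun v hv =>
        hlam0 v (Finset.mem_of_mem_filter v hv)).mp hlcz.symm
    have hBz : B = 0 := Finset.sum_eq_zero fun v hv => by rw [hzc v hv, zero_mul]
    have hlp1 : lp = 1 := by linarith
    have htm : m ≤ ⟪z, η⟫ := by rw [hzinner, hBz]; nlinarith
    calc Metric.infDist z K0 ≤ dist z w₀ := Metric.infDist_le_dist_of_mem hw₀
      _ = ‖z - w₀‖ := dist_eq_norm z w₀
      _ ≤ ‖z‖ + ‖w₀‖ := norm_sub_le z w₀
      _ ≤ 2*R := by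
          have h1 := hKball z hzK; have h2 := hKball w₀ hw₀K; linarith
      _ ≤ ((2*R+1)/m) * ⟪z, η⟫ := by
          rw [div_mul_eq_mul_div, le_div_iff₀ hm]
          nlinarith
  · -- mass on both sides: cross the hyperplane
    set P := lp⁻¹ • ∑ v ∈ Sp, lam v • v with hP
    set N := lc⁻¹ • ∑ v ∈ Sc, lam v • v with hN
    set α := A / lp with hα
    set β := B / lc with hβ
    have hlpne : lp ≠ 0 := ne_of_gt hlp'
    have hlcne : lc ≠ 0 := ne_of_gt hlc'
    have hα0 : 0 < α := div_pos hA0 hlp'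
    have hβ0 : 0 ≤ β := div_nonneg hB0 (le_of_lt hlc')
    have hαβ : 0 < α + β := by linarith
    have hαβne : α + β ≠ 0 := ne_of_gt hαβ
    have hlpα : lp * α = A := by rw [hα]; field_simp
    have hlcβ : lc * β = B := by rw [hβ]; field_simp
    have hPK : P ∈ K := by
      rw [hK]
      have hcm : Sp.centerMass lam id = P := by
        rw [Finset.centerMass, hP, hlp]
        simp
      rw [← hcm]
      exact Finset.centerMass_mem_convexHull Sp
        (fun v hv => hlam0 v (Finset.mem_of_mem_filter v hv)) (hlp ▸ hlp')
        (fun v hv => Finset.mem_coe.mpr (Finset.mem_of_mem_filter v hv))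
    have hNK : N ∈ K := by
      rw [hK]
      have hcm : Sc.centerMass lam id = N := by
        rw [Finset.centerMass, hN, hlc]
        simp
      rw [← hcm]
      exact Finset.centerMass_mem_convexHull Sc
        (fun v hv => hlam0 v (Finset.mem_of_mem_filter v hv)) (hlc ▸ hlc')
        (fun v hv => Finset.mem_coe.mpr (Finset.mem_of_mem_filter v hv))
    have hPi : ⟪P, η⟫ = α := by
      rw [hP, real_inner_smul_left, sum_inner, hα]
      rw [Finset.sum_congr rfl fun v _ => real_inner_smul_left v η (lam v)]
      rw [← hA, div_eq_inv_mul]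
    have hNi : ⟪N, η⟫ = -β := by
      rw [hN, real_inner_smul_left, sum_inner, hβ]
      rw [Finset.sum_congr rfl fun v _ => real_inner_smul_left v η (lam v)]
      have hsum : ∑ v ∈ Sc, lam v * ⟪v, η⟫ = -B := by
        rw [hB, ← Finset.sum_neg_distrib]
        exact Finset.sum_congr rfl fun v _ => by ring
      rw [hsum]
      field_simp
    set w := (α+β)⁻¹ • (β • P + α • N) with hw
    have hwK : w ∈ K := by
      have hform : w = ((α+β)⁻¹*β) • P + ((α+β)⁻¹*α) • N := by
        rw [hw]; module
      rw [hform]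
      exact hKconv hPK hNK (by positivity) (by positivity) (by field_simp; ring)
    have hwi : ⟪w, η⟫ = 0 := by
      simp only [hw, real_inner_smul_left, inner_add_left, hPi, hNi]
      ring
    have hwK0 : w ∈ K0 := by rw [hK0]; exact ⟨hwK, hwi⟩
    have hzPN : z = lp • P + lc • N := by
      rw [hP, hN, smul_inv_smul₀ hlpne, smul_inv_smul₀ hlcne, ← hlamz,
        ← Finset.sum_filter_add_sum_filter_not S (fun v => 0 < ⟪v, η⟫) (fun v => lam v • v)]
    clear_value P N α β w A B lp lc
    have key : z - w = (⟪z, η⟫/(α+β)) • (P - N) := by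
      rw [hzinner, hzPN, hw]
      match_scalars
      · field_simp
        linear_combination hlpα + β*hsplit - hlcβ
      · field_simp
        linear_combination hlcβ + α*hsplit - hlpα
    have hαm : m ≤ α := by
      rw [hα, le_div_iff₀ hlp']
      linarith [hAml]
    have hPN : ‖P - N‖ ≤ 2*R := by
      have h1 := hKball P hPK
      have h2 := hKball N hNK
      calc ‖P - N‖ ≤ ‖P‖ + ‖N‖ := norm_sub_le P N
        _ ≤ 2*R := by linarith
    calc Metric.infDist z K0 ≤ dist z w := Metric.infDist_le_dist_of_mem hwK0
      _ = ‖z - w‖ := dist_eq_norm z w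
      _ = |⟪z, η⟫/(α+β)| * ‖P - N‖ := by rw [key, norm_smul, Real.norm_eq_abs]
      _ = (⟪z, η⟫/(α+β)) * ‖P - N‖ := by rw [abs_of_pos (div_pos ht' hαβ)]
      _ ≤ (⟪z, η⟫/m) * (2*R+1) := by
          apply mul_le_mul
          · gcongr
            · linarith
          · linarith
          · exact norm_nonneg _
          · positivity
      _ = ((2*R+1)/m) * ⟪z, η⟫ := by ring

theorem polytope_slice_distance (d : ℕ)
    (S : Finset (EuclideanSpace ℝ (Fin d)))
    (η : EuclideanSpace ℝ (Fin d)) (hη : ‖η‖ = 1)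
    (K : Set (EuclideanSpace ℝ (Fin d))) (hK : K = convexHull ℝ (S : Set (EuclideanSpace ℝ (Fin d))))
    (K0 : Set (EuclideanSpace ℝ (Fin d))) (hK0 : K0 = {x ∈ K | ⟪x, η⟫ = 0})
    (hne : K0.Nonempty) :
    ∃ c > (0:ℝ), ∀ z ∈ K, Metric.infDist z K0 ≤ c * |⟪z, η⟫| := by
  obtain ⟨w₀, hw₀⟩ := hne
  have hSne : S.Nonempty := by
    by_contra h
    rw [Finset.not_nonempty_iff_eq_empty] at h
    have hw₀K : w₀ ∈ K := by rw [hK0] at hw₀; exact hw₀.1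
    rw [hK, h] at hw₀K
    simp at hw₀K
  set R := S.sup' hSne (fun v => ‖v‖) with hRdef
  have hR : ∀ v ∈ S, ‖v‖ ≤ R := fun v hv => Finset.le_sup' _ hv
  have hR0 : 0 ≤ R := le_trans (norm_nonneg hSne.choose) (hR _ hSne.choose_spec)
  obtain ⟨m, hm, hmabs⟩ : ∃ m : ℝ, 0 < m ∧ ∀ v ∈ S, ⟪v, η⟫ ≠ 0 → m ≤ |⟪v, η⟫| := by
    by_cases hT : (S.filter (fun v => ⟪v, η⟫ ≠ 0)).Nonempty
    · refine ⟨(S.filter (fun v => ⟪v, η⟫ ≠ 0)).inf' hT (fun v => |⟪v, η⟫|), ?_, ?_⟩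
      · rw [Finset.lt_inf'_iff]
        intro v hv
        exact abs_pos.mpr (Finset.mem_filter.mp hv).2
      · intro v hv hvne
        exact Finset.inf'_le _ (Finset.mem_filter.mpr ⟨hv, hvne⟩)
    · refine ⟨1, zero_lt_one, fun v hv hvne => absurd ⟨v, Finset.mem_filter.mpr ⟨hv, hvne⟩⟩ hT⟩
  refine ⟨(2*R+1)/m, by positivity, fun z hz => ?_⟩
  have hK0' : K0 = {x ∈ K | ⟪x, -η⟫ = 0} := by
    rw [hK0]
    ext x
    simp [inner_neg_right, neg_eq_zero]
  rcases le_or_gt 0 ⟪z, η⟫ with hsgn | hsgn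
  · rw [abs_of_nonneg hsgn]
    refine polytope_slice_aux d S η K hK K0 hK0 w₀ hw₀ m R hm hR ?_ z hz hsgn
    intro v hv hvpos
    have := hmabs v hv (ne_of_gt hvpos)
    rwa [abs_of_pos hvpos] at this
  · have habs : |⟪z, η⟫| = ⟪z, -η⟫ := by
      rw [inner_neg_right, abs_of_neg hsgn]
    rw [habs]
    refine polytope_slice_aux d S (-η) K hK K0 hK0' w₀ hw₀ m R hm hR ?_ z hz
      (by rw [inner_neg_right]; linarith)
    intro v hv hvpos
    rw [inner_neg_right] at hvpos ⊢
    have := hmabs v hv (by linarith)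
    rw [abs_of_neg (by linarith)] at this
    linarith
end

section
/- Let $V \subset \mathbb{R}^d$ be a finite set, $K = \mathrm{conv}(V)$, $\eta$ a unit vector, $K_0 = \{x \in K : \langle x, \eta\rangle = 0\}$ nonempty, and suppose $\varphi : V \to K_0$ satisfies $\|v - \varphi(v)\|_2 \leq c\langle \eta, v - \varphi(v)\rangle$ for all $v \in V$ with $\langle v, \eta\rangle \geq 0$. Then for any $z \in \mathrm{conv}\{v \in V : \langle v,\eta\rangle \geq 0\}$, there exists $x \in K_0$ with $\|z - x\|_2 \leq c\langle \eta, z\rangle$. -/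
open scoped RealInnerProductSpace

theorem polytope_vertex_map_extension (d : ℕ)
    (V : Finset (EuclideanSpace ℝ (Fin d)))
    (η : EuclideanSpace ℝ (Fin d)) (hη : ‖η‖ = 1)
    (K : Set (EuclideanSpace ℝ (Fin d)))
    (hK : K = convexHull ℝ (V : Set (EuclideanSpace ℝ (Fin d))))
    (K0 : Set (EuclideanSpace ℝ (Fin d))) (hK0 : K0 = {x ∈ K | ⟪x, η⟫ = 0})
    (hne : K0.Nonempty)
    (c : ℝ) (φ : EuclideanSpace ℝ (Fin d) → EuclideanSpace ℝ (Fin d))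
    (hφmem : ∀ v ∈ V, φ v ∈ K0)
    (hφ : ∀ v ∈ V, 0 ≤ ⟪v, η⟫ → ‖v - φ v‖ ≤ c * ⟪η, v - φ v⟫) :
    ∀ z ∈ convexHull ℝ {v : EuclideanSpace ℝ (Fin d) | v ∈ V ∧ 0 ≤ ⟪v, η⟫},
      ∃ x ∈ K0, ‖z - x‖ ≤ c * ⟪η, z⟫ := by
  have hplane : Convex ℝ {x : EuclideanSpace ℝ (Fin d) | ⟪x, η⟫ = (0:ℝ)} := by
    intro x hx y hy a b _ _ _
    simp only [Set.mem_setOf_eq] at *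
    rw [inner_add_left, real_inner_smul_left, real_inner_smul_left, hx, hy]
    ring
  have hK0conv : Convex ℝ K0 := by
    rw [hK0]
    exact (hK ▸ convex_convexHull ℝ _).inter hplane
  intro z hz
  rw [convexHull_eq] at hz
  obtain ⟨ι, t, w, p, hw0, hw1, hp, hz⟩ := hz
  refine ⟨t.centerMass w (fun i => φ (p i)), ?_, ?_⟩
  · rw [Finset.centerMass_eq_of_sum_1 _ _ hw1]
    exact hK0conv.sum_mem hw0 hw1 fun i hi => hφmem _ (hp i hi).1
  · rw [← hz, Finset.centerMass_eq_of_sum_1 _ _ hw1,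
      Finset.centerMass_eq_of_sum_1 _ _ hw1, ← Finset.sum_sub_distrib]
    have key : ∀ i ∈ t, ‖w i • p i - w i • φ (p i)‖ ≤ w i * (c * ⟪η, p i - φ (p i)⟫) := by
      intro i hi
      rw [← smul_sub, norm_smul, Real.norm_eq_abs, abs_of_nonneg (hw0 i hi)]
      exact mul_le_mul_of_nonneg_left (hφ _ (hp i hi).1 (hp i hi).2) (hw0 i hi)
    calc ‖∑ i ∈ t, (w i • p i - w i • φ (p i))‖
        ≤ ∑ i ∈ t, ‖w i • p i - w i • φ (p i)‖ := norm_sum_le _ _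
      _ ≤ ∑ i ∈ t, w i * (c * ⟪η, p i - φ (p i)⟫) := Finset.sum_le_sum key
      _ = c * ⟪η, ∑ i ∈ t, w i • p i⟫ := by
          have hφ0 : ∀ i ∈ t, ⟪η, φ (p i)⟫ = 0 := fun i hi => by
            have := (hK0 ▸ hφmem _ (hp i hi).1).2
            rwa [real_inner_comm]
          have : ∀ i ∈ t, w i * (c * ⟪η, p i - φ (p i)⟫) = c * (w i * ⟪η, p i⟫) := by
            intro i hi
            rw [inner_sub_right, hφ0 i hi, sub_zero]; ring
          rw [Finset.sum_congr rfl this, inner_sum, Finset.mul_sum]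
          exact Finset.sum_congr rfl fun i hi => by rw [real_inner_smul_right]
end

section
/- Let $\Delta, I \in \mathbb{R}_{\geq 0}^k$ with $I(x^*) = 0$ and $\Delta(x^*) = 0$ for a distinguished index $x^*$, and let $\delta > 0$ satisfy $2\delta \leq \Delta(x) + \delta$ for all $x \neq x^*$ (i.e. $\delta \leq \min_{x\neq x^*}\Delta(x)$), with $\hat\Delta(x) = \Delta(x) + \delta$. Suppose $I(z) > 0$ for some $z \neq x^*$. Then the distribution $\mu = (1-p)e_{x^*} + p\,e_{z_0}$ with $z_0 = \arg\min_{z \neq x^*}\Delta(z)/I(z)$ and $p = \delta/\Delta(z_0)$ minimizes the information ratio $\Psi(\mu) = \hat\Delta(\mu)^2/I(\mu)$ over all probability distributions on $[k]$, and $\min_\mu \Psi(\mu) = 4\delta\,\Delta(z_0)/I(z_0)$. -/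
theorem oracle_ids_distribution (k : ℕ) (Δ I : Fin k → ℝ)
    (hΔ : ∀ x, 0 ≤ Δ x) (hI : ∀ x, 0 ≤ I x)
    (xstar : Fin k) (hIstar : I xstar = 0) (hΔstar : Δ xstar = 0)
    (δ : ℝ) (hδ : 0 < δ) (hδmin : ∀ x, x ≠ xstar → δ ≤ Δ x)
    (z0 : Fin k) (hz0 : z0 ≠ xstar) (hIz0 : 0 < I z0)
    (hz0min : ∀ z, z ≠ xstar → 0 < I z → Δ z0 / I z0 ≤ Δ z / I z)
    (hΔz0 : δ < Δ z0)
    (p : ℝ) (hp : p = δ / Δ z0)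
    (μ : Fin k → ℝ)
    (hμ : ∀ x, μ x = (1 - p) * (if x = xstar then 1 else 0)
        + p * (if x = z0 then 1 else 0))
    (Ψ : (Fin k → ℝ) → ℝ)
    (hΨ : ∀ ν, Ψ ν = (∑ x, ν x * (Δ x + δ)) ^ 2 / (∑ x, ν x * I x)) :
    (∀ x, 0 ≤ μ x) ∧ (∑ x, μ x) = 1 ∧
      Ψ μ = 4 * δ * Δ z0 / I z0 ∧
      ∀ ν : Fin k → ℝ, (∀ x, 0 ≤ ν x) → (∑ x, ν x) = 1 →
        0 < (∑ x, ν x * I x) → Ψ μ ≤ Ψ ν := by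
  have hΔz0pos : 0 < Δ z0 := hδ.trans hΔz0
  have hp0 : 0 < p := by rw [hp]; positivity
  have hp1 : p < 1 := by rw [hp]; rw [div_lt_one hΔz0pos]; exact hΔz0
  have key : ∀ f : Fin k → ℝ, ∑ x, μ x * f x = (1 - p) * f xstar + p * f z0 := by
    intro f
    simp only [hμ, add_mul, mul_assoc, ite_mul, one_mul, zero_mul, mul_ite, mul_zero]
    rw [Finset.sum_add_distrib]
    simp [Finset.sum_ite_eq']
  have hpΔ : p * Δ z0 = δ := by rw [hp]; field_simp
  refine ⟨?_, ?_, ?_, ?_⟩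
  · intro x
    rw [hμ]
    split_ifs <;> nlinarith
  · have := key (fun _ => 1)
    simpa using this
  · rw [hΨ]
    rw [key (fun x => Δ x + δ), key I]
    simp only [hΔstar, hIstar, mul_zero, zero_add]
    have h1 : (1 - p) * δ + p * (Δ z0 + δ) = 2 * δ := by nlinarith
    rw [h1]
    rw [hp]
    field_simp
    ring
  · intro ν hν hνsum hνI
    rw [hΨ, hΨ]
    rw [key (fun x => Δ x + δ), key I]
    simp only [hΔstar, hIstar, mul_zero, zero_add]
    have h1 : (1 - p) * δ + p * (Δ z0 + δ) = 2 * δ := by nlinarith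
    rw [h1]
    set S := ∑ x, ν x * Δ x with hS
    set B := ∑ x, ν x * I x with hB
    have hS0 : 0 ≤ S := Finset.sum_nonneg fun x _ => mul_nonneg (hν x) (hΔ x)
    have hA : ∑ x, ν x * (Δ x + δ) = S + δ := by
      have : ∑ x, ν x * (Δ x + δ) = (∑ x, ν x * Δ x) + δ * ∑ x, ν x := by
        rw [Finset.mul_sum, ← Finset.sum_add_distrib]; congr 1; ext x; ring
      rw [this, hνsum]; ring
    rw [hA]
    have hBS : B * Δ z0 ≤ S * I z0 := by
      rw [hB, hS, Finset.sum_mul, Finset.sum_mul]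
      apply Finset.sum_le_sum
      intro x _
      rcases eq_or_ne x xstar with h | h
      · rw [h, hIstar]
        have := mul_nonneg (mul_nonneg (hν xstar) (hΔ xstar)) hIz0.le
        nlinarith
      · rcases (hI x).eq_or_lt with h2 | h2
        · rw [← h2]
          have := mul_nonneg (mul_nonneg (hν x) (hΔ x)) hIz0.le
          nlinarith
        · have := hz0min x h h2
          rw [div_le_div_iff₀ hIz0 h2] at this
          nlinarith [hν x]
      done
    have hpos : 0 < p * I z0 := mul_pos hp0 hIz0
    rw [div_le_div_iff₀ hpos hνI]
    have h4 : 4 * δ * S ≤ (S + δ) ^ 2 := by nlinarith [sq_nonneg (S - δ)]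
    have : p * I z0 * Δ z0 = δ * I z0 := by nlinarith
    nlinarith [mul_pos hδ hνI, sq_nonneg (S + δ), mul_le_mul_of_nonneg_left hBS hδ.le,
      mul_le_mul_of_nonneg_right h4 hIz0.le]
end

section
/- Let $\mu^*$ minimize the information ratio $\Psi(\mu) = \hat\Delta(\mu)^2/I(\mu)$ over probability distributions on $[k]$, where $\hat\Delta(x) \geq \delta > 0$ for all $x$ and $\hat\Delta(x^*) = \delta$ for some index $x^*$, and $I(\mu^*) > 0$. Then $\hat\Delta(\mu^*) \leq 2\delta$. -/
theorem ids_almost_greedy (k : ℕ) (Δ I : Fin k → ℝ) (hI : ∀ x, 0 ≤ I x)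
    (δ : ℝ) (hδ : 0 < δ) (xstar : Fin k) (hstar : Δ xstar = δ)
    (hΔ : ∀ x, δ ≤ Δ x)
    (Ψ : (Fin k → ℝ) → ℝ)
    (hΨ : ∀ ν, Ψ ν = (∑ x, ν x * Δ x) ^ 2 / (∑ x, ν x * I x))
    (μstar : Fin k → ℝ) (hpos : ∀ x, 0 ≤ μstar x) (hsum : (∑ x, μstar x) = 1)
    (hIpos : 0 < ∑ x, μstar x * I x)
    (hmin : ∀ ν : Fin k → ℝ, (∀ x, 0 ≤ ν x) → (∑ x, ν x) = 1 →
      0 < (∑ x, ν x * I x) → Ψ μstar ≤ Ψ ν) :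
    ∑ x, μstar x * Δ x ≤ 2 * δ := by
  by_contra hcon
  push_neg at hcon
  set D : ℝ := ∑ x, μstar x * Δ x with hD
  set V : ℝ := ∑ x, μstar x * I x with hV
  set W : ℝ := I xstar with hW
  have hWnn : 0 ≤ W := hI xstar
  have hDge : δ ≤ D := by
    calc δ = ∑ x, μstar x * δ := by rw [← Finset.sum_mul, hsum, one_mul]
    _ ≤ D := Finset.sum_le_sum fun x _ => mul_le_mul_of_nonneg_left (hΔ x) (hpos x)
  have hDpos : 0 < D := lt_of_lt_of_le hδ hDge
  have hepos : 0 < (D - δ)^2 := pow_pos (by linarith) 2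
  have hcpos : 0 < D * (D - 2 * δ) := mul_pos hDpos (by linarith)
  set e : ℝ := (D - δ)^2 with he
  set c : ℝ := D * (D - 2 * δ) with hc
  set t : ℝ := min (1/2) (c / (2 * e)) with ht
  have htpos : 0 < t := lt_min (by norm_num) (by positivity)
  have htlt : t < 1 := lt_of_le_of_lt (min_le_left _ _) (by norm_num)
  have hte : t * e ≤ c / 2 := by
    have h1 : t ≤ c / (2 * e) := min_le_right _ _
    calc t * e ≤ (c / (2 * e)) * e := mul_le_mul_of_nonneg_right h1 (le_of_lt hepos)
    _ = c / 2 := by field_simp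
  set ν : Fin k → ℝ := fun x => (1 - t) * μstar x + (if x = xstar then t else 0) with hν
  have hνpos : ∀ x, 0 ≤ ν x := by
    intro x
    have := hpos x
    simp only [hν]
    split <;> nlinarith
  have hνsum : (∑ x, ν x) = 1 := by
    simp only [hν, Finset.sum_add_distrib, ← Finset.mul_sum, hsum,
      Finset.sum_ite_eq', Finset.mem_univ, if_true]
    ring
  have hνI : (∑ x, ν x * I x) = (1 - t) * V + t * W := by
    simp only [hν, add_mul, ite_mul, zero_mul, Finset.sum_add_distrib,
      Finset.sum_ite_eq', Finset.mem_univ, if_true, mul_assoc, ← Finset.mul_sum, hV, hW]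
  have hνΔ : (∑ x, ν x * Δ x) = (1 - t) * D + t * δ := by
    simp only [hν, add_mul, ite_mul, zero_mul, Finset.sum_add_distrib,
      Finset.sum_ite_eq', Finset.mem_univ, if_true, mul_assoc, ← Finset.mul_sum, hD, hstar]
  have hdenpos : 0 < (1 - t) * V + t * W := by nlinarith
  have hkey := hmin ν hνpos hνsum (by rw [hνI]; exact hdenpos)
  rw [hΨ, hΨ, hνI, hνΔ, ← hD, ← hV] at hkey
  rw [div_le_div_iff₀ hIpos hdenpos] at hkey
  -- hkey : D^2 * ((1-t)*V + t*W) ≤ ((1-t)*D + t*δ)^2 * V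
  -- From W ≥ 0 and t > 0: (1-t)*D^2*V ≤ ((1-t)*D+t*δ)^2*V, divide by V:
  have h2 : (1 - t) * D ^ 2 ≤ ((1 - t) * D + t * δ) ^ 2 := by
    nlinarith [mul_nonneg (mul_nonneg (sq_nonneg D) htpos.le) hWnn]
  nlinarith [mul_pos htpos hcpos, mul_le_mul_of_nonneg_left hte htpos.le]
end

section
/- Let $\theta^*, \hat\theta \in \mathbb{R}^d$, $V$ positive definite with $\|\hat\theta - \theta^*\|_V^2 \leq \beta$, and let $\mathcal{X} \subset \mathbb{R}^d$ be finite with $x^* = \arg\max_x \langle x, \theta^*\rangle$. Define $\hat\Delta(x) = \max_{z\in\mathcal{X}}\big(\langle z, \hat\theta\rangle + \beta^{1/2}\|z\|_{V^{-1}}\big) - \langle x, \hat\theta\rangle$ and $\Delta(x) = \langle x^* - x, \theta^*\rangle$. Then $\Delta(x) \leq 2\hat\Delta(x)$ for all $x \in \mathcal{X}$. -/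
open Matrix

lemma dot_symm_aux {d : ℕ} {V : Matrix (Fin d) (Fin d) ℝ} (hV : V.PosSemidef)
    (a b : Fin d → ℝ) : a ⬝ᵥ (V *ᵥ b) = b ⬝ᵥ (V *ᵥ a) := by
  have h : Vᵀ = V := by
    have := hV.1
    rwa [Matrix.IsHermitian, conjTranspose_eq_transpose_of_trivial] at this
  rw [dotProduct_mulVec, ← mulVec_transpose, h, dotProduct_comm]

lemma cs_aux {d : ℕ} {V : Matrix (Fin d) (Fin d) ℝ} (hV : V.PosSemidef)
    (u w : Fin d → ℝ) :
    (u ⬝ᵥ (V *ᵥ w))^2 ≤ (u ⬝ᵥ (V *ᵥ u)) * (w ⬝ᵥ (V *ᵥ w)) := by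
  have h : ∀ t : ℝ, 0 ≤ (u ⬝ᵥ (V *ᵥ u)) * (t*t) + (2 * (u ⬝ᵥ (V *ᵥ w))) * t
      + (w ⬝ᵥ (V *ᵥ w)) := by
    intro t
    have h0 := hV.dotProduct_mulVec_nonneg (t • u + w)
    simp only [mulVec_add, mulVec_smul, add_dotProduct, dotProduct_add,
      smul_dotProduct, dotProduct_smul, smul_eq_mul, star_trivial] at h0
    have hs := dot_symm_aux hV w u
    rw [hs] at h0
    nlinarith [h0]
  have hd := discrim_le_zero h
  rw [discrim] at hd
  nlinarith [hd]

theorem gap_estimate_upper_bound (d : ℕ)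
    (Xset : Finset (Fin d → ℝ)) (hXne : Xset.Nonempty)
    (θstar θhat : Fin d → ℝ)
    (V : Matrix (Fin d) (Fin d) ℝ) (hV : V.PosDef)
    (β : ℝ) (hβ : (θhat - θstar) ⬝ᵥ (V *ᵥ (θhat - θstar)) ≤ β)
    (xstar : Fin d → ℝ) (hxs : xstar ∈ Xset)
    (hmax : ∀ x ∈ Xset, θstar ⬝ᵥ x ≤ θstar ⬝ᵥ xstar)
    (Δhat : (Fin d → ℝ) → ℝ)
    (hΔhat : ∀ x, Δhat x =
      Xset.sup' hXne (fun z => θhat ⬝ᵥ z + Real.sqrt β * Real.sqrt (z ⬝ᵥ (V⁻¹ *ᵥ z)))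
        - θhat ⬝ᵥ x) :
    ∀ x ∈ Xset, θstar ⬝ᵥ (xstar - x) ≤ 2 * Δhat x := by
  intro x hx
  set w : Fin d → ℝ := θhat - θstar with hw
  have hVinv : V * V⁻¹ = 1 := mul_nonsing_inv V (isUnit_iff_ne_zero.mpr hV.det_pos.ne')
  -- key: for any z, |z ⬝ᵥ w| ≤ √β * √(z ⬝ᵥ V⁻¹ z)
  have key : ∀ z : Fin d → ℝ, |z ⬝ᵥ w| ≤ Real.sqrt β * Real.sqrt (z ⬝ᵥ (V⁻¹ *ᵥ z)) := by
    intro z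
    set u : Fin d → ℝ := V⁻¹ *ᵥ z with hu
    have hVu : V *ᵥ u = z := by
      rw [hu, mulVec_mulVec, hVinv, one_mulVec]
    have hzw : z ⬝ᵥ w = u ⬝ᵥ (V *ᵥ w) := by
      rw [← hVu, dot_symm_aux hV.posSemidef, hVu, dotProduct_comm]
    have hzz : z ⬝ᵥ (V⁻¹ *ᵥ z) = u ⬝ᵥ (V *ᵥ u) := by
      rw [← hu, ← hVu]
      rw [dot_symm_aux hV.posSemidef, hVu, dotProduct_comm]
    have hcs := cs_aux hV.posSemidef u w
    have hwnn : 0 ≤ w ⬝ᵥ (V *ᵥ w) := hV.posSemidef.dotProduct_mulVec_nonneg w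
    have hunn : 0 ≤ u ⬝ᵥ (V *ᵥ u) := hV.posSemidef.dotProduct_mulVec_nonneg u
    have hβnn : 0 ≤ β := le_trans hwnn hβ
    rw [hzw, hzz]
    have h1 : (u ⬝ᵥ (V *ᵥ w))^2 ≤ β * (u ⬝ᵥ (V *ᵥ u)) := by
      nlinarith
    calc |u ⬝ᵥ (V *ᵥ w)| = Real.sqrt ((u ⬝ᵥ (V *ᵥ w))^2) := (Real.sqrt_sq_eq_abs _).symm
      _ ≤ Real.sqrt (β * (u ⬝ᵥ (V *ᵥ u))) := Real.sqrt_le_sqrt h1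
      _ = Real.sqrt β * Real.sqrt (u ⬝ᵥ (V *ᵥ u)) := Real.sqrt_mul hβnn _
  set f : (Fin d → ℝ) → ℝ :=
    fun z => θhat ⬝ᵥ z + Real.sqrt β * Real.sqrt (z ⬝ᵥ (V⁻¹ *ᵥ z)) with hf
  have hsup_xs : f xstar ≤ Xset.sup' hXne f := Finset.le_sup' f hxs
  have hsup_x : f x ≤ Xset.sup' hXne f := Finset.le_sup' f hx
  have hxs_key := key xstar
  have hx_key := key x
  have hxsw : xstar ⬝ᵥ w = θhat ⬝ᵥ xstar - θstar ⬝ᵥ xstar := by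
    rw [hw, dotProduct_sub, dotProduct_comm xstar θhat, dotProduct_comm xstar θstar]
  have hxw : x ⬝ᵥ w = θhat ⬝ᵥ x - θstar ⬝ᵥ x := by
    rw [hw, dotProduct_sub, dotProduct_comm x θhat, dotProduct_comm x θstar]
  rw [hΔhat x, dotProduct_sub]
  have habs1 := abs_le.mp hxs_key
  have habs2 := abs_le.mp hx_key
  rw [hxsw] at habs1
  rw [hxw] at habs2
  have hfx : Real.sqrt β * Real.sqrt (x ⬝ᵥ (V⁻¹ *ᵥ x)) = f x - θhat ⬝ᵥ x := by
    simp [hf]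
  simp only [hf] at hsup_xs hsup_x
  linarith [habs1.1, habs1.2, habs2.1, habs2.2]
end
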